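/- Let S be a semigroup, let (X_1, …, X_n) be a fragile list of elements of S, and let A ∈ S be such that the extended list (X_1, …, X_n, A) is sturdy, with cutting point M = max{ 1 ≤ m ≤ n : Q_m ~_L Q_{m+1} } where Q_m denotes the m-th suffix product of (X_1, …, X_n, A). Then M ≤ n and the list (X_{M+1}, …, X_n, A) is fragile; consequently, updating a fragile state by appending A and cutting always yields a fragile list. -/
import Mathlib


/-- Green's L-preorder on a semigroup: `a ≤_L b` iff `a = b` or `a = t * b` for some `t`. -/
def leL {S : Type*} [Semigroup S] (a b : S) : Prop := a = b ∨ ∃ t : S, a = t * b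

/-- Strict Green's L-preorder: `a <_L b`. -/
def ltL {S : Type*} [Semigroup S] (a b : S) : Prop := leL a b ∧ ¬ leL b a

/-- Green's L-equivalence: `a ~_L b`. -/
def eqvL {S : Type*} [Semigroup S] (a b : S) : Prop := leL a b ∧ leL b a

/-- Product of the nonempty list `l ++ [a]`.
A nonempty list `(X_1, …, X_n)` of elements of a semigroup is encoded as the pair
`(l, a)` with `l = [X_1, …, X_{n-1}]` and `a = X_n`. -/
def nprod {S : Type*} [Semigroup S] (l : List S) (a : S) : S := l.foldr (· * ·) a

/-- `suffP l a m` is the product of `(l ++ [a]).drop m`, i.e. the suffix product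
`P_{m+1} = X_{m+1} * ⋯ * X_n` (1-indexed) of the nonempty list encoded by `(l, a)`. -/
def suffP {S : Type*} [Semigroup S] (l : List S) (a : S) (m : ℕ) : S := nprod (l.drop m) a

/-- The nonempty list encoded by `(l, a)` is fragile if its chain of suffix products
`P_1 ≤_L P_2 ≤_L ⋯ ≤_L P_n` is strict throughout. -/
def Fragile {S : Type*} [Semigroup S] (l : List S) (a : S) : Prop :=
  ∀ m, m < l.length → ltL (suffP l a m) (suffP l a (m + 1))

/-- A nonempty list is sturdy if it is not fragile. -/
def Sturdy {S : Type*} [Semigroup S] (l : List S) (a : S) : Prop := ¬ Fragile l a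

lemma nprod_mul {S : Type*} [Semigroup S] (xs : List S) (b A : S) :
    nprod xs b * A = nprod xs (b * A) := by
  induction xs with
  | nil => rfl
  | cons x xs ih => simp only [nprod, List.foldr_cons] at *; rw [mul_assoc, ih]

lemma suffP_append {S : Type*} [Semigroup S] (l : List S) (a A : S) (k : ℕ)
    (hk : k ≤ l.length) :
    suffP (l ++ [a]) A k = suffP l a k * A := by
  unfold suffP
  rw [List.drop_append_of_le_length hk, nprod_mul]
  unfold nprod
  rw [List.foldr_append]
  rfl

lemma leL_mul_right {S : Type*} [Semigroup S] {p q : S} (h : leL p q) (A : S) :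
    leL (p * A) (q * A) := by
  rcases h with h | ⟨t, ht⟩
  · exact Or.inl (by rw [h])
  · exact Or.inr ⟨t, by rw [ht, mul_assoc]⟩

/-- the chain of suffix products of the extended list is `≤_L` throughout -/
lemma chain_leL {S : Type*} [Semigroup S] (l : List S) (a A : S)
    (hf : Fragile l a) (k : ℕ) (hk : k < l.length + 1) :
    leL (suffP (l ++ [a]) A k) (suffP (l ++ [a]) A (k + 1)) := by
  rcases Nat.lt_or_ge k l.length with h | h
  · rw [suffP_append l a A k (le_of_lt h), suffP_append l a A (k + 1) h]
    exact leL_mul_right (hf k h).1 A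
  · have hk' : k = l.length := le_antisymm (Nat.lt_succ_iff.mp hk) h
    subst hk'
    have h1 : suffP (l ++ [a]) A l.length = a * A := by
      unfold suffP
      rw [List.drop_append_of_le_length le_rfl, List.drop_length]
      rfl
    have h2 : suffP (l ++ [a]) A (l.length + 1) = A := by
      unfold suffP
      have : (l ++ [a]).drop (l.length + 1) = [] := by
        apply List.drop_eq_nil_of_le; simp
      rw [this]; rfl
    rw [h1, h2]
    exact Or.inr ⟨a, rfl⟩

/-- If `(X_1, …, X_n)` is fragile and appending `A` makes
`(X_1, …, X_n, A)` sturdy with cutting point `M = max { 1 ≤ m ≤ n : Q_m ~_L Q_{m+1} }`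
(where `Q_m` are the suffix products of the extended list), then `M ≤ n` and
`(X_{M+1}, …, X_n, A)` is fragile: updating a fragile state by appending and cutting
always yields a fragile list. -/
theorem append_cut_fragile {S : Type*} [Semigroup S] (l : List S) (a : S) (A : S)
    (hf : Fragile l a) (hs : Sturdy (l ++ [a]) A) (M : ℕ)
    (hM : IsGreatest
      {m : ℕ | 1 ≤ m ∧ m ≤ (l ++ [a]).length ∧
        eqvL (suffP (l ++ [a]) A (m - 1)) (suffP (l ++ [a]) A m)} M) :
    M ≤ l.length + 1 ∧ Fragile ((l ++ [a]).drop M) A := by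
  clear hs
  obtain ⟨⟨hM1, hM2, _⟩, hmax⟩ := hM
  simp only [List.length_append, List.length_singleton] at hM2
  refine ⟨hM2, ?_⟩
  intro m hm
  have hlen : ((l ++ [a]).drop M).length = l.length + 1 - M := by simp
  rw [hlen] at hm
  have hMm : M + m < l.length + 1 := by omega
  have hdrop : ∀ j, suffP ((l ++ [a]).drop M) A j = suffP (l ++ [a]) A (M + j) := by
    intro j
    unfold suffP
    rw [List.drop_drop, Nat.add_comm]
  rw [hdrop, hdrop]
  have hle2 : leL (suffP (l ++ [a]) A (M + m)) (suffP (l ++ [a]) A (M + m + 1)) :=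
    chain_leL l a A hf (M + m) hMm
  refine ⟨hle2, fun hcon => ?_⟩
  have : M + m + 1 ∈ {m : ℕ | 1 ≤ m ∧ m ≤ (l ++ [a]).length ∧
        eqvL (suffP (l ++ [a]) A (m - 1)) (suffP (l ++ [a]) A m)} := by
    refine ⟨by omega, by simp; omega, ?_⟩
    simpa using ⟨hle2, hcon⟩
  have := hmax this
  omega
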